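/- Let G be an RDF graph over nodes V and labels Σ, let e be a property path, and assume u is a term of G. Then for every node v, the pair (u,v) belongs to ⟦e⟧_G if and only if there exists a word w ∈ L(e) over the signed alphabet Σ± and a w-labeled path from u to v in G. -/

import Mathlib

/-- Letters of the signed alphabet `Σ± = Σ ∪ {a⁻ | a ∈ Σ}`. -/
inductive Signed (σ : Type*) where
  | pos (a : σ)
  | neg (a : σ)

/-- Flip the sign of a signed letter. -/
def Signed.flip {σ : Type*} : Signed σ → Signed σ
  | .pos a => .neg a
  | .neg a => .pos a

/-- `inv w`: reverse the word and flip every letter. -/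
def winv {σ : Type*} (w : List (Signed σ)) : List (Signed σ) :=
  (w.map Signed.flip).reverse

/-- `Step G ℓ x y` means `G ⊢ x →ℓ y`. An RDF graph is a finite set of triples. -/
def Step {V σ : Type*} (G : Finset (V × σ × V)) : Signed σ → V → V → Prop
  | .pos a, x, y => (x, a, y) ∈ G
  | .neg a, x, y => (y, a, x) ∈ G

/-- A `w`-labeled path from `x` to `y` in `G`. -/
inductive LabPath {V σ : Type*} (G : Finset (V × σ × V)) : V → List (Signed σ) → V → Prop
  | nil (x : V) : LabPath G x [] x
  | cons {x y z : V} {ℓ : Signed σ} {w : List (Signed σ)} :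
      Step G ℓ x y → LabPath G y w z → LabPath G x (ℓ :: w) z

/-- A term of `G`: a node occurring as subject or object of a triple of `G`. -/
def IsTerm {V σ : Type*} (G : Finset (V × σ × V)) (x : V) : Prop :=
  ∃ p y, (x, p, y) ∈ G ∨ (y, p, x) ∈ G

/-- Property paths `e ::= a | e⁻ | e₁·e₂ | e₁+e₂ | e* | e?`. -/
inductive PP (σ : Type*) where
  | base (a : σ)
  | inv (e : PP σ)
  | comp (e₁ e₂ : PP σ)
  | alt (e₁ e₂ : PP σ)
  | star (e : PP σ)
  | opt (e : PP σ)

/-- `relPow r n` is the `(n+1)`-fold relational composition of `r`. -/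
def relPow {V : Type*} (r : V → V → Prop) : ℕ → V → V → Prop
  | 0 => r
  | n + 1 => Relation.Comp r (relPow r n)

/-- The semantics `⟦e⟧_G` of a property path over an RDF graph. -/
def sem {V σ : Type*} (G : Finset (V × σ × V)) : PP σ → V → V → Prop
  | .base a => fun x y => (x, a, y) ∈ G
  | .inv e => fun x y => sem G e y x
  | .comp e₁ e₂ => Relation.Comp (sem G e₁) (sem G e₂)
  | .alt e₁ e₂ => fun x y => sem G e₁ x y ∨ sem G e₂ x y
  | .star e => fun x y => (∃ n, relPow (sem G e) n x y) ∨ (x = y ∧ IsTerm G x)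
  | .opt e => fun x y => sem G e x y ∨ (x = y ∧ IsTerm G x)

/-- The language `L(e) ⊆ (Σ±)*` of a property path. -/
def lang {σ : Type*} : PP σ → Language (Signed σ)
  | .base a => {[Signed.pos a]}
  | .inv e => winv '' lang e
  | .comp e₁ e₂ => lang e₁ * lang e₂
  | .alt e₁ e₂ => lang e₁ + lang e₂
  | .star e => KStar.kstar (lang e)
  | .opt e => lang e + 1

/-- A run of an NFA with transition relation `δ` on a word. -/
inductive NFARun {σ Q : Type*} (δ : Q → Signed σ → Q → Prop) :
    Q → List (Signed σ) → Q → Prop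
  | nil (q : Q) : NFARun δ q [] q
  | cons {q q' q'' : Q} {ℓ : Signed σ} {w : List (Signed σ)} :
      δ q ℓ q' → NFARun δ q' w q'' → NFARun δ q (ℓ :: w) q''

/-- The language `L(A)` of the NFA `(Q, Σ±, q0, F, δ)`. -/
def nfaLang {σ Q : Type*} (δ : Q → Signed σ → Q → Prop) (q0 : Q) (F : Set Q) :
    Language (Signed σ) :=
  {w | ∃ qf ∈ F, NFARun δ q0 w qf}

/-- Edge relation of the product graph `G × A`. -/
def ProdEdge {V σ Q : Type*} (G : Finset (V × σ × V)) (δ : Q → Signed σ → Q → Prop) :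
    V × Q → V × Q → Prop :=
  fun p p' => ∃ ℓ, Step G ℓ p.1 p'.1 ∧ δ p.2 ℓ p'.2

/-- Edge relation of the transition graph of the NFA. -/
def TransEdge {σ Q : Type*} (δ : Q → Signed σ → Q → Prop) : Q → Q → Prop :=
  fun q q' => ∃ ℓ, δ q ℓ q'

/-- `NSteps r n a b`: there is a directed path with exactly `n` edges from `a` to `b`. -/
def NSteps {α : Type*} (r : α → α → Prop) : ℕ → α → α → Prop
  | 0 => fun a b => a = b
  | n + 1 => fun a c => ∃ b, r a b ∧ NSteps r n b c

/-- Distance (in `ℕ∞`) from a node to a set of nodes in a directed graph. -/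
noncomputable def distToSet {α : Type*} (r : α → α → Prop) (S : Set α) (a : α) : ℕ∞ :=
  ⨅ (n : ℕ) (_ : ∃ b ∈ S, NSteps r n a b), (n : ℕ∞)

section Aux

variable {V σ : Type*} {G : Finset (V × σ × V)}

lemma step_flip {ℓ : Signed σ} {x y : V} (h : Step G ℓ x y) : Step G ℓ.flip y x := by
  cases ℓ <;> exact h

lemma step_terms {ℓ : Signed σ} {x y : V} (h : Step G ℓ x y) :
    IsTerm G x ∧ IsTerm G y := by
  cases ℓ with
  | pos a => exact ⟨⟨a, y, Or.inl h⟩, ⟨a, x, Or.inr h⟩⟩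
  | neg a => exact ⟨⟨a, y, Or.inr h⟩, ⟨a, x, Or.inl h⟩⟩

lemma labPath_append {x y z : V} {w₁ w₂ : List (Signed σ)}
    (h₁ : LabPath G x w₁ y) (h₂ : LabPath G y w₂ z) : LabPath G x (w₁ ++ w₂) z := by
  induction h₁ with
  | nil => exact h₂
  | cons s _ ih => exact LabPath.cons s (ih h₂)

lemma labPath_split {x z : V} {w₁ w₂ : List (Signed σ)}
    (h : LabPath G x (w₁ ++ w₂) z) : ∃ y, LabPath G x w₁ y ∧ LabPath G y w₂ z := by
  induction w₁ generalizing x with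
  | nil => exact ⟨x, LabPath.nil x, h⟩
  | cons ℓ w₁ ih =>
    cases h with
    | cons s p =>
      obtain ⟨y, hy1, hy2⟩ := ih p
      exact ⟨y, LabPath.cons s hy1, hy2⟩

lemma labPath_reverse {x y : V} {w : List (Signed σ)}
    (h : LabPath G x w y) : LabPath G y (winv w) x := by
  induction h with
  | nil x => exact LabPath.nil x
  | cons s _ ih =>
    simp only [winv, List.map_cons, List.reverse_cons]
    exact labPath_append (by simpa [winv] using ih)
      (LabPath.cons (step_flip s) (LabPath.nil _))

lemma signed_flip_flip (ℓ : Signed σ) : ℓ.flip.flip = ℓ := by cases ℓ <;> rfl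

lemma winv_winv (w : List (Signed σ)) : winv (winv w) = w := by
  simp only [winv, List.map_reverse, List.reverse_reverse, List.map_map]
  conv_rhs => rw [← List.map_id w]
  exact List.map_congr_left (fun ℓ _ => signed_flip_flip ℓ)

lemma labPath_end_term {x y : V} {w : List (Signed σ)}
    (h : LabPath G x w y) (hx : IsTerm G x) : IsTerm G y := by
  induction h with
  | nil => exact hx
  | cons s _ ih => exact ih (step_terms s).2

lemma sem_forward (e : PP σ) :
    ∀ u v : V, sem G e u v → ∃ w ∈ lang e, LabPath G u w v := by
  induction e with
  | base a =>
    intro u v h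
    exact ⟨[Signed.pos a], rfl, LabPath.cons h (LabPath.nil v)⟩
  | inv e ih =>
    intro u v h
    obtain ⟨w, hw, hp⟩ := ih v u h
    exact ⟨winv w, ⟨w, hw, rfl⟩, labPath_reverse hp⟩
  | comp e₁ e₂ ih₁ ih₂ =>
    intro u v h
    obtain ⟨m, h1, h2⟩ := h
    obtain ⟨w₁, hw₁, hp₁⟩ := ih₁ u m h1
    obtain ⟨w₂, hw₂, hp₂⟩ := ih₂ m v h2
    exact ⟨w₁ ++ w₂, Language.mem_mul.2 ⟨w₁, hw₁, w₂, hw₂, rfl⟩, labPath_append hp₁ hp₂⟩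
  | alt e₁ e₂ ih₁ ih₂ =>
    intro u v h
    rcases h with h | h
    · obtain ⟨w, hw, hp⟩ := ih₁ u v h
      exact ⟨w, Or.inl hw, hp⟩
    · obtain ⟨w, hw, hp⟩ := ih₂ u v h
      exact ⟨w, Or.inr hw, hp⟩
  | star e ih =>
    intro u v h
    rcases h with ⟨n, hn⟩ | ⟨rfl, _⟩
    · induction n generalizing u with
      | zero =>
        obtain ⟨w, hw, hp⟩ := ih u v hn
        exact ⟨w, Language.mem_kstar.2 ⟨[w], by simp, by simp [hw]⟩, hp⟩
      | succ n ihn =>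
        obtain ⟨m, h1, h2⟩ := hn
        obtain ⟨w₁, hw₁, hp₁⟩ := ih u m h1
        obtain ⟨w, hw, hp⟩ := ihn m h2
        obtain ⟨L, rfl, hL⟩ := Language.mem_kstar.1 hw
        refine ⟨w₁ ++ L.flatten, Language.mem_kstar.2 ⟨w₁ :: L, by simp, ?_⟩,
          labPath_append hp₁ hp⟩
        intro y hy
        rcases List.mem_cons.1 hy with rfl | hy
        · exact hw₁
        · exact hL y hy
    · exact ⟨[], Language.mem_kstar.2 ⟨[], by simp, by simp⟩, LabPath.nil u⟩
  | opt e ih =>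
    intro u v h
    rcases h with h | ⟨rfl, _⟩
    · obtain ⟨w, hw, hp⟩ := ih u v h
      exact ⟨w, Or.inl hw, hp⟩
    · exact ⟨[], Or.inr rfl, LabPath.nil u⟩

lemma sem_backward (e : PP σ) :
    ∀ u v : V, IsTerm G u → (∃ w ∈ lang e, LabPath G u w v) → sem G e u v := by
  induction e with
  | base a =>
    rintro u v _ ⟨w, hw, hp⟩
    have hw' : w = [Signed.pos a] := hw
    subst hw'
    cases hp with
    | cons s p => cases p; exact s
  | inv e ih =>
    rintro u v hu ⟨w, hw, hp⟩
    obtain ⟨w', hw', rfl⟩ := hw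
    have hp' : LabPath G v w' u := by
      have := labPath_reverse hp
      rwa [winv_winv] at this
    have hv : IsTerm G v := labPath_end_term hp hu
    exact ih v u hv ⟨w', hw', hp'⟩
  | comp e₁ e₂ ih₁ ih₂ =>
    rintro u v hu ⟨w, hw, hp⟩
    obtain ⟨w₁, hw₁, w₂, hw₂, rfl⟩ := Language.mem_mul.1 hw
    obtain ⟨m, hp₁, hp₂⟩ := labPath_split hp
    have hm : IsTerm G m := labPath_end_term hp₁ hu
    exact ⟨m, ih₁ u m hu ⟨w₁, hw₁, hp₁⟩, ih₂ m v hm ⟨w₂, hw₂, hp₂⟩⟩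
  | alt e₁ e₂ ih₁ ih₂ =>
    rintro u v hu ⟨w, hw, hp⟩
    rcases hw with hw | hw
    · exact Or.inl (ih₁ u v hu ⟨w, hw, hp⟩)
    · exact Or.inr (ih₂ u v hu ⟨w, hw, hp⟩)
  | star e ih =>
    rintro u v hu ⟨w, hw, hp⟩
    obtain ⟨L, rfl, hL⟩ := Language.mem_kstar.1 hw
    clear hw
    induction L generalizing u with
    | nil =>
      cases hp
      exact Or.inr ⟨rfl, hu⟩
    | cons w₁ L ihL =>
      rw [List.flatten_cons] at hp
      obtain ⟨m, hp₁, hp₂⟩ := labPath_split hp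
      have hm : IsTerm G m := labPath_end_term hp₁ hu
      have h1 : sem G e u m := ih u m hu ⟨w₁, hL w₁ (by simp), hp₁⟩
      have h2 := ihL m hm (fun y hy => hL y (List.mem_cons_of_mem _ hy)) hp₂
      rcases h2 with ⟨n, hn⟩ | ⟨rfl, _⟩
      · exact Or.inl ⟨n + 1, m, h1, hn⟩
      · exact Or.inl ⟨0, h1⟩
  | opt e ih =>
    rintro u v hu ⟨w, hw, hp⟩
    rcases hw with hw | hw
    · exact Or.inl (ih u v hu ⟨w, hw, hp⟩)
    · change w ∈ (1 : Language (Signed σ)) at hw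
      rw [Language.mem_one] at hw
      subst hw
      cases hp
      exact Or.inr ⟨rfl, hu⟩

end Aux

/-- `(u,v) ∈ ⟦e⟧_G` iff there is a word `w ∈ L(e)` and a
`w`-labeled path from `u` to `v` in `G`, provided `u` is a term of `G`. -/
theorem stmt1 {V σ : Type*} (G : Finset (V × σ × V)) (e : PP σ)
    (u : V) (hu : IsTerm G u) :
    ∀ v : V, sem G e u v ↔ ∃ w ∈ lang e, LabPath G u w v := by
  intro v
  exact ⟨sem_forward e u v, sem_backward e u v hu⟩
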